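/- Let p be a prime, t > s ≥ 1 integers, and let m₂, D₁, w₂ be integers with m₂, w₂, D₁ all coprime to p. For 1 ≤ k ≤ p^{t−s}, define j_k to be the residue class mod p^{t−s} of (w₂(m₂p^s D₁ k + w₂))⁻¹ · m₂ D₁ k, the inverse taken in the units mod p^{t−s}. Then the map k ↦ j_k is a bijection from residues mod p^{t−s} to residues mod p^{t−s}. -/

import Mathlib

/-- The map `k ↦ (w₂(m₂ p^s D₁ k + w₂))⁻¹ · m₂ D₁ k` is a bijection on residues mod `p^{t-s}`. -/
theorem stmt_7 (p : ℕ) (hp : p.Prime) (s t : ℕ) (hs : 1 ≤ s) (hst : s < t)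
    (m₂ D₁ w₂ : ℤ) (hm₂ : IsCoprime m₂ (p : ℤ)) (hw₂ : IsCoprime w₂ (p : ℤ))
    (hD₁ : IsCoprime D₁ (p : ℤ)) :
    Function.Bijective (fun k : ZMod (p ^ (t - s)) =>
      ((w₂ : ZMod (p ^ (t - s))) *
          ((m₂ : ZMod (p ^ (t - s))) * (p : ZMod (p ^ (t - s))) ^ s *
            (D₁ : ZMod (p ^ (t - s))) * k + (w₂ : ZMod (p ^ (t - s)))))⁻¹ *
        ((m₂ : ZMod (p ^ (t - s))) * (D₁ : ZMod (p ^ (t - s))) * k)) := by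
  haveI : NeZero (p ^ (t - s)) := ⟨pow_ne_zero _ hp.pos.ne'⟩
  set e := t - s with he
  set M : ZMod (p ^ e) := (m₂ : ZMod (p ^ e)) with hM
  set D : ZMod (p ^ e) := (D₁ : ZMod (p ^ e)) with hD
  set W : ZMod (p ^ e) := (w₂ : ZMod (p ^ e)) with hW
  set P : ZMod (p ^ e) := (p : ZMod (p ^ e)) with hP
  have hz : P ^ e = 0 := by rw [hP, ← Nat.cast_pow, ZMod.natCast_self]
  have hPnil : IsNilpotent P := ⟨e, hz⟩
  have key : ∀ x : ℤ, IsCoprime x (p : ℤ) → IsUnit ((x : ZMod (p ^ e))) := by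
    intro x hx
    obtain ⟨a, b, hab⟩ := (hx.pow_right (n := e))
    have h2 := congrArg (Int.cast : ℤ → ZMod (p ^ e)) hab
    push_cast at h2
    rw [show ((p : ZMod (p ^ e)) : ZMod (p ^ e)) ^ e = 0 from hz, mul_zero, add_zero] at h2
    exact IsUnit.of_mul_eq_one _ (by rw [mul_comm]; exact h2)
  have hMu := key m₂ hm₂
  have hDu := key D₁ hD₁
  have hWu := key w₂ hw₂
  obtain ⟨s', rfl⟩ : ∃ s', s = s' + 1 := ⟨s - 1, by omega⟩
  have hden : ∀ k : ZMod (p ^ e), IsUnit (M * P ^ (s' + 1) * D * k + W) := by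
    intro k
    have hnil : IsNilpotent (M * P ^ (s' + 1) * D * k) := by
      have : M * P ^ (s' + 1) * D * k = P * (P ^ s' * M * D * k) := by ring
      rw [this]
      exact (Commute.all _ _).isNilpotent_mul_right hPnil
    exact hnil.isUnit_add_right_of_commute hWu (Commute.all _ _)
  rw [Finite.injective_iff_bijective.symm]
  intro k1 k2 h
  simp only at h
  have hu1 : IsUnit (W * (M * P ^ (s' + 1) * D * k1 + W)) := hWu.mul (hden k1)
  have hu2 : IsUnit (W * (M * P ^ (s' + 1) * D * k2 + W)) := hWu.mul (hden k2)
  set u1 := W * (M * P ^ (s' + 1) * D * k1 + W) with hu1def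
  set u2 := W * (M * P ^ (s' + 1) * D * k2 + W) with hu2def
  have h1 : u1 * u1⁻¹ = 1 := ZMod.mul_inv_of_unit _ hu1
  have h2 : u2 * u2⁻¹ = 1 := ZMod.mul_inv_of_unit _ hu2
  have keyeq : u2 * (M * D * k1) = u1 * (M * D * k2) := by
    linear_combination (u1 * u2) * h - (u2 * (M * D * k1)) * h1 + (u1 * (M * D * k2)) * h2
  have hcanc : IsUnit (W * W * M * D) := ((hWu.mul hWu).mul hMu).mul hDu
  have : (W * W * M * D) * k1 = (W * W * M * D) * k2 := by
    rw [hu1def, hu2def] at keyeq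
    linear_combination keyeq
  exact hcanc.mul_left_cancel this
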